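/- arXiv:2402.05677 — 3 statements merged into one kernel-verified Lean document; each statement's English description precedes it below -/
import Mathlib

section
/- Let n ≥ 1 and k ≥ 2. The operation ⋆ on G = 𝔽_{2^n} × ℤ/2^kℤ given by (x₁,y₁) ⋆ (x₂,y₂) = (x₁+x₂, y₁+y₂+2^{k−1}·ι(Tr(x₁x₂))) is associative, has identity (0,0), and every element (x,y) has the inverse (x, −y+2^{k−1}·ι(Tr(x))); moreover, there exists a bijection φ : 𝔽_{2^n} × ℤ/2^kℤ → (ℤ/2ℤ)^n × ℤ/2^kℤ with φ(g₁ ⋆ g₂) = φ(g₁) + φ(g₂) for all g₁, g₂, i.e., (G, ⋆) is a group isomorphic to ℤ₂^n × ℤ_{2^k}. -/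
open Finset

noncomputable section

/-- The absolute trace Tr(x) = x + x² + x⁴ + … + x^{2^{n−1}}. -/
def Tr {F : Type} [Field F] (n : ℕ) (x : F) : F :=
  ∑ i ∈ Finset.range n, x ^ (2 ^ i)

/-- ι(e): the lift of e ∈ {0,1} ⊆ F to {0,1} ⊆ ℤ, viewed in ℤ/2^kℤ. -/
def iotaZ {F : Type} [Field F] [DecidableEq F] (k : ℕ) (e : F) : ZMod (2 ^ k) :=
  if e = 1 then 1 else 0

/-- The operation ⋆ on 𝔽_{2^n} × ℤ/2^kℤ:
(x₁,y₁) ⋆ (x₂,y₂) = (x₁+x₂, y₁+y₂+2^{k−1}·ι(Tr(x₁x₂))). -/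
def star {F : Type} [Field F] [DecidableEq F] (n k : ℕ)
    (p q : F × ZMod (2 ^ k)) : F × ZMod (2 ^ k) :=
  (p.1 + q.1, p.2 + q.2 + 2 ^ (k - 1) * iotaZ k (Tr n (p.1 * q.1)))

-- double sum decomposition
lemma double_sum {M : Type} [AddCommMonoid M] (n : ℕ) (f : ℕ → ℕ → M) :
    ∑ i ∈ range n, ∑ j ∈ range n, f i j =
      (∑ i ∈ range n, ∑ j ∈ range i, (f i j + f j i)) + ∑ i ∈ range n, f i i := by
  induction n with
  | zero => simp
  | succ m ih =>
    rw [Finset.sum_range_succ]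
    conv_lhs => rw [Finset.sum_congr rfl (fun i _ => Finset.sum_range_succ (f i) m)]
    rw [Finset.sum_add_distrib, ih, Finset.sum_range_succ, Finset.sum_range_succ,
      Finset.sum_range_succ, Finset.sum_add_distrib]
    abel

set_option linter.unusedSectionVars false
variable {F : Type} [Field F] [DecidableEq F] [CharP F 2]

lemma Tr_add (n : ℕ) (x y : F) : Tr n (x + y) = Tr n x + Tr n y := by
  haveI : Fact (Nat.Prime 2) := ⟨Nat.prime_two⟩
  simp only [Tr, add_pow_char_pow, Finset.sum_add_distrib]

lemma Tr_sq (n : ℕ) (x : F) : Tr n x ^ 2 = Tr n (x ^ 2) := by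
  haveI : Fact (Nat.Prime 2) := ⟨Nat.prime_two⟩
  rw [Tr, sum_pow_char, Tr]
  exact Finset.sum_congr rfl fun i _ => by rw [← pow_mul, ← pow_mul, mul_comm]

lemma Tr_pow_two (n : ℕ) (x : F) (hx : x ^ 2 ^ n = x) : Tr n (x ^ 2) = Tr n x := by
  unfold Tr
  have h1 : ∀ i, (x ^ 2) ^ 2 ^ i = x ^ 2 ^ (i + 1) := fun i => by
    rw [← pow_mul, pow_succ, mul_comm (2^i) 2]
  calc ∑ i ∈ range n, (x ^ 2) ^ 2 ^ i = ∑ i ∈ range n, x ^ 2 ^ (i+1) := by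
        exact Finset.sum_congr rfl fun i _ => h1 i
    _ = ∑ i ∈ range n, x ^ 2 ^ i := by
        have h2 := Finset.sum_range_succ' (fun i => x ^ 2 ^ i) n
        have h3 := Finset.sum_range_succ (fun i => x ^ 2 ^ i) n
        simp only [pow_zero, pow_one, hx] at h2 h3
        exact add_right_cancel (h2.symm.trans h3)

lemma Tr_zero_or_one (n : ℕ) (x : F) (hx : x ^ 2 ^ n = x) : Tr n x = 0 ∨ Tr n x = 1 := by
  have h : Tr n x * (Tr n x - 1) = 0 := by
    have h2 := (Tr_sq n x).trans (Tr_pow_two n x hx)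
    linear_combination h2
  rcases mul_eq_zero.mp h with h | h
  · exact Or.inl h
  · exact Or.inr (sub_eq_zero.mp h)

def Q (n : ℕ) (x : F) : F := ∑ i ∈ range n, ∑ j ∈ range i, x ^ (2 ^ i + 2 ^ j)

lemma Q_add (n : ℕ) (x y : F) :
    Q n (x + y) = Q n x + Q n y + Tr n x * Tr n y + Tr n (x * y) := by
  haveI : Fact (Nat.Prime 2) := ⟨Nat.prime_two⟩
  have expand : ∀ i j : ℕ, (x + y) ^ (2 ^ i + 2 ^ j) =
      x ^ (2^i + 2^j) + y ^ (2^i + 2^j) +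
        (x ^ (2^i) * y ^ (2^j) + x ^ (2^j) * y ^ (2^i)) := by
    intro i j
    rw [pow_add, add_pow_char_pow, add_pow_char_pow, pow_add, pow_add]
    ring
  have hsplit : Q n (x + y) = Q n x + Q n y +
      ∑ i ∈ range n, ∑ j ∈ range i, (x ^ (2^i) * y ^ (2^j) + x ^ (2^j) * y ^ (2^i)) := by
    unfold Q
    simp only [expand, Finset.sum_add_distrib]
  rw [hsplit]
  have hd := double_sum n (fun i j => x ^ (2^i) * y ^ (2^j))
  have hTT : Tr n x * Tr n y = ∑ i ∈ range n, ∑ j ∈ range n, x ^ (2^i) * y ^ (2^j) :=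
    Finset.sum_mul_sum _ _ _ _
  have hdiag : ∑ i ∈ range n, x ^ (2^i) * y ^ (2^i) = Tr n (x * y) := by
    unfold Tr; exact Finset.sum_congr rfl fun i _ => (mul_pow x y (2^i)).symm
  have hcross : ∑ i ∈ range n, ∑ j ∈ range i, (x ^ (2^i) * y ^ (2^j) + x ^ (2^j) * y ^ (2^i))
      = Tr n x * Tr n y + Tr n (x * y) := by
    rw [hTT, hd, hdiag]
    have h0 := CharTwo.add_self_eq_zero (Tr n (x * y))
    linear_combination -h0
  rw [hcross]; ring

lemma Q_sq (n : ℕ) (hn : 1 ≤ n) (x : F) (hx : x ^ 2 ^ n = x) : Q n x ^ 2 = Q n x := by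
  haveI : Fact (Nat.Prime 2) := ⟨Nat.prime_two⟩
  unfold Q
  rw [Finset.sum_sigma' (range n) (fun i => range i) (fun i j => x ^ (2^i + 2^j)),
      sum_pow_char]
  refine Finset.sum_bij'
    (fun p _ => if p.1 + 1 = n then (⟨p.2 + 1, 0⟩ : Σ _ : ℕ, ℕ) else ⟨p.1 + 1, p.2 + 1⟩)
    (fun p _ => if p.2 = 0 then (⟨n - 1, p.1 - 1⟩ : Σ _ : ℕ, ℕ) else ⟨p.1 - 1, p.2 - 1⟩)
    ?_ ?_ ?_ ?_ ?_
  · rintro ⟨i, j⟩ hp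
    simp only [Finset.mem_sigma, Finset.mem_range] at hp
    dsimp only
    by_cases h : i + 1 = n <;>
      simp only [if_pos, if_neg, h, if_true, if_false, Finset.mem_sigma, Finset.mem_range] <;>
      omega
  · rintro ⟨i, j⟩ hp
    simp only [Finset.mem_sigma, Finset.mem_range] at hp
    dsimp only
    by_cases h : j = 0 <;>
      simp only [if_pos, if_neg, h, if_true, if_false, Finset.mem_sigma, Finset.mem_range] <;>
      omega
  · rintro ⟨i, j⟩ hp
    simp only [Finset.mem_sigma, Finset.mem_range] at hp
    dsimp only
    by_cases h : i + 1 = n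
    · rw [if_pos h, if_pos rfl]
      simp [show n - 1 = i by omega]
    · rw [if_neg h, if_neg (Nat.succ_ne_zero j)]
      simp
  · rintro ⟨i, j⟩ hp
    simp only [Finset.mem_sigma, Finset.mem_range] at hp
    dsimp only
    by_cases h : j = 0
    · rw [if_pos h, if_pos (by omega : n - 1 + 1 = n)]
      simp [h, show i - 1 + 1 = i by omega]
    · rw [if_neg h, if_neg (by omega : ¬ i - 1 + 1 = n)]
      simp [show i - 1 + 1 = i by omega, show j - 1 + 1 = j by omega]
  · rintro ⟨i, j⟩ hp
    simp only [Finset.mem_sigma, Finset.mem_range] at hp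
    have hexp : (x ^ (2 ^ i + 2 ^ j)) ^ 2 = x ^ (2 ^ (i+1) + 2 ^ (j+1)) := by
      rw [← pow_mul]; congr 1; ring
    dsimp only
    by_cases h : i + 1 = n
    · rw [if_pos h, hexp, h, pow_add, hx, pow_add, pow_zero, pow_one, mul_comm, pow_succ]
    · rw [if_neg h]
      exact hexp

lemma Q_zero_or_one (n : ℕ) (hn : 1 ≤ n) (x : F) (hx : x ^ 2 ^ n = x) :
    Q n x = 0 ∨ Q n x = 1 := by
  have h : Q n x * (Q n x - 1) = 0 := by linear_combination Q_sq n hn x hx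
  rcases mul_eq_zero.mp h with h | h
  · exact Or.inl h
  · exact Or.inr (sub_eq_zero.mp h)

lemma mem01_add {a b : F} (ha : a = 0 ∨ a = 1) (hb : b = 0 ∨ b = 1) :
    a + b = 0 ∨ a + b = 1 := by
  rcases ha with ha | ha <;> rcases hb with hb | hb <;> subst ha <;> subst hb <;> simp
  exact CharTwo.add_self_eq_zero 1

lemma mem01_mul {a b : F} (ha : a = 0 ∨ a = 1) (hb : b = 0 ∨ b = 1) :
    a * b = 0 ∨ a * b = 1 := by
  rcases ha with ha | ha <;> rcases hb with hb | hb <;> subst ha <;> subst hb <;> simp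

lemma two_tor (k : ℕ) (hk : 1 ≤ k) (w : ZMod (2 ^ k)) :
    2 ^ (k - 1) * w + 2 ^ (k - 1) * w = 0 := by
  have h : (2 : ZMod (2 ^ k)) ^ (k - 1) + 2 ^ (k - 1) = 0 := by
    have h2 : ((2 ^ k : ℕ) : ZMod (2 ^ k)) = 0 := ZMod.natCast_self _
    push_cast at h2
    calc (2 : ZMod (2 ^ k)) ^ (k - 1) + 2 ^ (k - 1) = 2 ^ (k - 1) * 2 := by ring
      _ = 2 ^ (k - 1 + 1) := by rw [pow_succ]
      _ = 0 := by rw [show k - 1 + 1 = k by omega, h2]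
  calc 2 ^ (k-1) * w + 2 ^ (k-1) * w = (2 ^ (k-1) + 2 ^ (k-1)) * w := by ring
    _ = 0 := by rw [h, zero_mul]

lemma eps_add (k : ℕ) (hk : 1 ≤ k) {a b : F} (ha : a = 0 ∨ a = 1) (hb : b = 0 ∨ b = 1) :
    2 ^ (k - 1) * iotaZ k a + 2 ^ (k - 1) * iotaZ k b
      = 2 ^ (k - 1) * iotaZ k (a + b) := by
  have h01 : (0 : F) ≠ 1 := zero_ne_one
  rcases ha with ha | ha <;> rcases hb with hb | hb <;> subst ha <;> subst hb <;>
    simp [iotaZ, h01]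
  linear_combination two_tor k hk (1 : ZMod (2 ^ k))

lemma iota_mul (k : ℕ) {a b : F} (ha : a = 0 ∨ a = 1) (hb : b = 0 ∨ b = 1) :
    iotaZ k (a * b) = iotaZ k a * iotaZ k b := by
  have h01 : (0 : F) ≠ 1 := zero_ne_one
  rcases ha with ha | ha <;> rcases hb with hb | hb <;> subst ha <;> subst hb <;>
    simp [iotaZ, h01]

lemma carry (k : ℕ) (hk : 2 ≤ k) {a b : F} (ha : a = 0 ∨ a = 1) (hb : b = 0 ∨ b = 1) :
    2 ^ (k - 2) * iotaZ k a + 2 ^ (k - 2) * iotaZ k b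
      = 2 ^ (k - 2) * iotaZ k (a + b) + 2 ^ (k - 1) * (iotaZ k a * iotaZ k b) := by
  have h01 : (0 : F) ≠ 1 := zero_ne_one
  rcases ha with ha | ha <;> rcases hb with hb | hb <;> subst ha <;> subst hb <;>
    simp [iotaZ, h01]
  calc (2 : ZMod (2^k)) ^ (k-2) + 2 ^ (k-2) = 2 ^ (k-2) * 2 := by ring
    _ = 2 ^ (k-2+1) := by rw [pow_succ]
    _ = 2 ^ (k-1) := by rw [show k - 2 + 1 = k - 1 by omega]

lemma cocycle (n k : ℕ) (hn : 1 ≤ n) (hk : 2 ≤ k) (hpow : ∀ z : F, z ^ 2 ^ n = z) (x y : F) :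
    (2 ^ (k-2) * iotaZ k (Tr n x) + 2 ^ (k-1) * iotaZ k (Q n x)) +
      (2 ^ (k-2) * iotaZ k (Tr n y) + 2 ^ (k-1) * iotaZ k (Q n y)) =
    (2 ^ (k-2) * iotaZ k (Tr n (x+y)) + 2 ^ (k-1) * iotaZ k (Q n (x+y))) +
      2 ^ (k-1) * iotaZ k (Tr n (x*y)) := by
  have hk1 : 1 ≤ k := by omega
  have hTx := Tr_zero_or_one n x (hpow x)
  have hTy := Tr_zero_or_one n y (hpow y)
  have hTxy := Tr_zero_or_one n (x*y) (hpow _)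
  have hQx := Q_zero_or_one n hn x (hpow x)
  have hQy := Q_zero_or_one n hn y (hpow y)
  have hQxy := Q_zero_or_one n hn (x+y) (hpow _)
  have h1 := carry k hk hTx hTy
  rw [show Tr n x + Tr n y = Tr n (x+y) from (Tr_add n x y).symm] at h1
  have h2 : Q n x + Q n y = Q n (x+y) + (Tr n x * Tr n y + Tr n (x*y)) := by
    linear_combination - Q_add n x y - CharTwo.add_self_eq_zero (Tr n x * Tr n y)
      - CharTwo.add_self_eq_zero (Tr n (x*y))
  have h3 := eps_add k hk1 hQx hQy
  rw [h2] at h3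
  have h5 := eps_add k hk1 hQxy (mem01_add (mem01_mul hTx hTy) hTxy)
  have h6 := eps_add k hk1 (mem01_mul hTx hTy) hTxy
  have h7 := iota_mul k hTx hTy
  have h8 := two_tor k hk1 (iotaZ k (Tr n x) * iotaZ k (Tr n y))
  linear_combination h1 + h3 + h8 + (2:ZMod (2^k)) ^ (k-1) * h7 - h5 - h6

/-- For n ≥ 1 and k ≥ 2, the operation ⋆ is associative, has identity (0,0),
every element (x,y) has inverse (x, −y+2^{k−1}·ι(Tr(x))), and (G,⋆) is
isomorphic to ℤ₂^n × ℤ_{2^k}. -/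
theorem stmt2 {F : Type} [Field F] [Fintype F] [DecidableEq F] (n k : ℕ)
    (hn : 1 ≤ n) (hk : 2 ≤ k) (hF : Fintype.card F = 2 ^ n) :
    (∀ a b c : F × ZMod (2 ^ k), star n k (star n k a b) c = star n k a (star n k b c)) ∧
    (∀ a : F × ZMod (2 ^ k),
      star n k ((0 : F), (0 : ZMod (2 ^ k))) a = a ∧
      star n k a ((0 : F), (0 : ZMod (2 ^ k))) = a) ∧
    (∀ (x : F) (y : ZMod (2 ^ k)),
      star n k (x, y) (x, -y + 2 ^ (k - 1) * iotaZ k (Tr n x)) =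
        ((0 : F), (0 : ZMod (2 ^ k)))) ∧
    (∃ φ : F × ZMod (2 ^ k) → (Fin n → ZMod 2) × ZMod (2 ^ k),
      Function.Bijective φ ∧ ∀ a b, φ (star n k a b) = φ a + φ b) := by
  have hk1 : 1 ≤ k := by omega
  -- characteristic 2
  obtain ⟨m, hp, hcard⟩ := FiniteField.card F (ringChar F)
  have h2 : ringChar F = 2 := by
    have hdvd : ringChar F ∣ 2 ^ n := by
      rw [← hF, hcard]; exact dvd_pow_self _ (by exact_mod_cast m.ne_zero)
    exact (Nat.prime_dvd_prime_iff_eq hp Nat.prime_two).mp (hp.dvd_of_dvd_pow hdvd)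
  haveI hchar : CharP F 2 := h2 ▸ ringChar.charP F
  have hpow : ∀ z : F, z ^ 2 ^ n = z := fun z => by rw [← hF]; exact FiniteField.pow_card z
  have hTr0 : Tr n (0 : F) = 0 := by
    unfold Tr
    exact Finset.sum_eq_zero fun i _ => zero_pow (Nat.two_pow_pos i).ne' 
  have hi0 : iotaZ (F := F) k 0 = 0 := by simp [iotaZ]
  -- the cocycle function c
  set c : F → ZMod (2 ^ k) :=
    fun x => 2 ^ (k-2) * iotaZ k (Tr n x) + 2 ^ (k-1) * iotaZ k (Q n x) with hc
  have hco : ∀ x y : F, c x + c y = c (x + y) + 2 ^ (k-1) * iotaZ k (Tr n (x * y)) :=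
    fun x y => cocycle n k hn hk hpow x y
  refine ⟨?_, ?_, ?_, ?_⟩
  · -- associativity
    rintro ⟨x1, y1⟩ ⟨x2, y2⟩ ⟨x3, y3⟩
    simp only [_root_.star, Prod.mk.injEq]
    constructor
    · exact add_assoc x1 x2 x3
    · have e12 := hco x1 x2
      have e123 := hco (x1 + x2) x3
      have e23 := hco x2 x3
      have e123' := hco x1 (x2 + x3)
      rw [show x1 + (x2 + x3) = x1 + x2 + x3 from (add_assoc x1 x2 x3).symm] at e123'
      linear_combination -(e12 + e123 - e23 - e123')
  · rintro ⟨x, y⟩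
    constructor <;> simp [_root_.star, hTr0, hi0]
  · intro x y
    have hTxx : Tr n (x * x) = Tr n x := by
      rw [show x * x = x ^ 2 by ring]; exact Tr_pow_two n x (hpow x)
    simp only [_root_.star, Prod.mk.injEq]
    constructor
    · exact CharTwo.add_self_eq_zero x
    · rw [hTxx]
      linear_combination two_tor k hk1 (iotaZ k (Tr n x))
  · -- the isomorphism
    letI := ZMod.algebra F 2
    haveI : Module.Finite (ZMod 2) F := Module.Finite.of_finite
    have hrank : Module.finrank (ZMod 2) F = n := by
      have hcardF := Module.card_fintype (Module.finBasis (ZMod 2) F)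
      rw [ZMod.card, Fintype.card_fin, hF] at hcardF
      exact (Nat.pow_right_injective le_rfl hcardF.symm)
    set L : F ≃ₗ[ZMod 2] (Fin n → ZMod 2) :=
      ((Module.finBasis (ZMod 2) F).reindex (finCongr hrank)).equivFun with hL
    refine ⟨fun p => (L p.1, p.2 + c p.1), ?_, ?_⟩
    · rw [Function.bijective_iff_has_inverse]
      refine ⟨fun q => (L.symm q.1, q.2 - c (L.symm q.1)), ?_, ?_⟩
      · rintro ⟨x, y⟩
        simp
      · rintro ⟨v, z⟩
        simp
    · rintro ⟨x1, y1⟩ ⟨x2, y2⟩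
      simp only [_root_.star, Prod.mk.injEq, Prod.mk_add_mk]
      constructor
      · exact map_add L x1 x2
      · linear_combination -(hco x1 x2)
end
end

section
/- Let n ≥ 1 and k ≥ 2. The number of pairs (x,y) ∈ 𝔽_{2^n} × ℤ/2^kℤ satisfying 2y + 2^{k−1}·ι(Tr(x)) = 0 in ℤ/2^kℤ (i.e., the elements of order at most 2 in the group (𝔽_{2^n} × ℤ/2^kℤ, ⋆)) is exactly 2^{n+1}. -/
noncomputable section

lemma two_mul_eq_zero_iff (k : ℕ) (hk : 1 ≤ k) (z : ZMod (2^k)) :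
    2 * z = 0 ↔ z = 0 ∨ z = ((2^(k-1) : ℕ) : ZMod (2^k)) := by
  haveI : NeZero (2^k) := ⟨by positivity⟩
  have hk' : 2^k = 2 * 2^(k-1) := by
    rw [← pow_succ']; congr 1; omega
  constructor
  · intro h
    have hz : ((z.val : ℕ) : ZMod (2^k)) = z := ZMod.natCast_rightInverse z
    have h2 : ((2 * z.val : ℕ) : ZMod (2^k)) = 0 := by push_cast [hz]; linear_combination h
    rw [ZMod.natCast_eq_zero_iff] at h2
    have h3 : 2 * 2^(k-1) ∣ 2 * z.val := by rw [← hk']; exact h2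
    have hdvd : 2^(k-1) ∣ z.val := (mul_dvd_mul_iff_left (two_ne_zero)).mp h3
    have hlt : z.val < 2 * 2^(k-1) := by rw [← hk']; exact z.val_lt
    obtain ⟨c, hc⟩ := hdvd
    have hpos : 0 < 2^(k-1) := by positivity
    have hc2 : c < 2 := by
      by_contra hcon
      push_neg at hcon
      have : 2 * 2^(k-1) ≤ 2^(k-1) * c := by
        calc 2 * 2^(k-1) = 2^(k-1) * 2 := by ring
        _ ≤ 2^(k-1) * c := by exact Nat.mul_le_mul_left _ hcon
      omega
    interval_cases c
    · left; rw [← hz, hc]; simp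
    · right; rw [← hz, hc]; simp
  · rintro (rfl | rfl)
    · simp
    · have : ((2 * 2^(k-1) : ℕ) : ZMod (2^k)) = 0 := by
        rw [← hk']; exact ZMod.natCast_self _
      push_cast at this ⊢
      linear_combination this

lemma count_two (k : ℕ) (hk : 2 ≤ k) (d : ZMod (2^k)) :
    (Finset.univ.filter fun y : ZMod (2^k) => 2 * y + 2 * d = 0).card = 2 := by
  haveI : NeZero (2^k) := ⟨by positivity⟩
  have hne : ((2^(k-1) : ℕ) : ZMod (2^k)) ≠ 0 := by
    rw [Ne, ZMod.natCast_eq_zero_iff]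
    intro h
    have := Nat.le_of_dvd (by positivity) h
    have : (2:ℕ)^(k-1) < 2^k := Nat.pow_lt_pow_right (by norm_num) (by omega)
    omega
  have hset : (Finset.univ.filter fun y : ZMod (2^k) => 2 * y + 2 * d = 0)
      = {(-d), (-d + ((2^(k-1) : ℕ) : ZMod (2^k)))} := by
    ext y
    simp only [Finset.mem_filter, Finset.mem_univ, true_and, Finset.mem_insert,
      Finset.mem_singleton]
    constructor
    · intro h
      have h2 : 2 * (y + d) = 0 := by linear_combination h
      rcases (two_mul_eq_zero_iff k (by omega) (y + d)).mp h2 with h3 | h3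
      · left; linear_combination h3
      · right; linear_combination h3
    · rintro (rfl | rfl)
      · ring
      · have h2 : 2 * ((-d + ((2^(k-1) : ℕ) : ZMod (2^k))) + d) = 0 :=
          (two_mul_eq_zero_iff k (by omega) _).mpr (Or.inr (by ring))
        linear_combination h2
  rw [hset, Finset.card_insert_of_notMem, Finset.card_singleton]
  simp only [Finset.mem_singleton]
  intro h
  apply hne
  linear_combination -h

/-- For n ≥ 1, k ≥ 2, the number of pairs (x,y) ∈ 𝔽_{2^n} × ℤ/2^kℤ with
2y + 2^{k−1}·ι(Tr(x)) = 0 (elements of order at most 2 in (𝔽_{2^n} × ℤ/2^kℤ, ⋆))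
is exactly 2^{n+1}. -/
theorem stmt7 {F : Type} [Field F] [Fintype F] [DecidableEq F] (n k : ℕ)
    (hn : 1 ≤ n) (hk : 2 ≤ k) (hF : Fintype.card F = 2 ^ n) :
    (Finset.univ.filter fun p : F × ZMod (2 ^ k) =>
        2 * p.2 + 2 ^ (k - 1) * iotaZ k (Tr n p.1) = 0).card = 2 ^ (n + 1) := by
  have key : ∀ x : F, (Finset.univ.filter fun y : ZMod (2^k) =>
      2 * y + 2 ^ (k - 1) * iotaZ k (Tr n x) = 0).card = 2 := by
    intro x
    have h : (2:ZMod (2^k)) ^ (k-1) * iotaZ k (Tr n x)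
        = 2 * ((2:ZMod (2^k))^(k-2) * iotaZ k (Tr n x)) := by
      rw [← mul_assoc, ← pow_succ']; congr 2; omega
    simp_rw [h]
    exact count_two k hk _
  rw [Finset.card_filter, Fintype.sum_prod_type]
  simp_rw [← Finset.card_filter]
  simp_rw [key]
  simp [hF]
  ring
end
end

section
/- Let m ≥ 3 and let d be a positive integer with d² ≡ 1 (mod 2^m−1). Let α₁, α₂, α₃ ∈ 𝔽_{2^m}^* be pairwise distinct with α_i^{d+1} = 1 for i = 1,2,3, and suppose α₄ := α₁+α₂+α₃ also satisfies α₄^{d+1} = 1 (in particular α₄ ≠ 0). Define π_i : 𝔽_{2^m} → 𝔽_{2^m} by π_i(y) = α_i y^d for i = 1,2,3,4. Then each π_i is an involution of 𝔽_{2^m} (π_i(π_i(y)) = y for all y), hence a permutation; moreover π₄(y) = π₁(y)+π₂(y)+π₃(y) for all y, so the permutations π₁, π₂, π₃ satisfy the (𝒜_m) property: π₄ = π₁+π₂+π₃ is a permutation and π₄^{−1} = π₁^{−1}+π₂^{−1}+π₃^{−1}. -/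
noncomputable section

/-- Let m ≥ 3, d² ≡ 1 (mod 2^m−1), and α₁,α₂,α₃ ∈ 𝔽_{2^m}^* pairwise distinct
with α_i^{d+1} = 1, α₄ = α₁+α₂+α₃ with α₄^{d+1} = 1. Then π_i(y) = α_i y^d
are involutions (hence permutations), π₄ = π₁+π₂+π₃ pointwise, and
π₁,π₂,π₃ satisfy the (𝒜_m) property: π₄ is a permutation and
π₄^{−1} = π₁^{−1}+π₂^{−1}+π₃^{−1}. -/
theorem stmt13 {F : Type} [Field F] [Fintype F] (m d : ℕ)
    (hm : 3 ≤ m) (hF : Fintype.card F = 2 ^ m)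
    (hd : 1 ≤ d) (hdd : d ^ 2 ≡ 1 [MOD 2 ^ m - 1])
    (α₁ α₂ α₃ α₄ : F)
    (h10 : α₁ ≠ 0) (h20 : α₂ ≠ 0) (h30 : α₃ ≠ 0)
    (h12 : α₁ ≠ α₂) (h13 : α₁ ≠ α₃) (h23 : α₂ ≠ α₃)
    (h1 : α₁ ^ (d + 1) = 1) (h2 : α₂ ^ (d + 1) = 1) (h3 : α₃ ^ (d + 1) = 1)
    (h4def : α₄ = α₁ + α₂ + α₃) (h4 : α₄ ^ (d + 1) = 1)
    (π₁ π₂ π₃ π₄ : F → F)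
    (hp1 : ∀ y, π₁ y = α₁ * y ^ d) (hp2 : ∀ y, π₂ y = α₂ * y ^ d)
    (hp3 : ∀ y, π₃ y = α₃ * y ^ d) (hp4 : ∀ y, π₄ y = α₄ * y ^ d) :
    (∀ y, π₁ (π₁ y) = y) ∧ (∀ y, π₂ (π₂ y) = y) ∧
    (∀ y, π₃ (π₃ y) = y) ∧ (∀ y, π₄ (π₄ y) = y) ∧
    Function.Bijective π₁ ∧ Function.Bijective π₂ ∧
    Function.Bijective π₃ ∧ Function.Bijective π₄ ∧
    (∀ y, π₄ y = π₁ y + π₂ y + π₃ y) ∧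
    (∀ y, Function.invFun π₄ y =
      Function.invFun π₁ y + Function.invFun π₂ y + Function.invFun π₃ y) := by
  -- y ^ (d^2) = y for all y
  have hn1 : 1 ≤ 2 ^ m - 1 := by
    have : 2 ^ 3 ≤ 2 ^ m := Nat.pow_le_pow_right (by norm_num) hm
    omega
  have hkey : ∀ y : F, y ^ (d ^ 2) = y := by
    intro y
    have hmod : d ^ 2 % (2 ^ m - 1) = 1 % (2 ^ m - 1) := hdd
    have hn2 : 2 ≤ 2 ^ m - 1 := by
      have : 2 ^ 3 ≤ 2 ^ m := Nat.pow_le_pow_right (by norm_num) hm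
      omega
    obtain ⟨q, hq⟩ : ∃ q, d ^ 2 = q * (2 ^ m - 1) + 1 := by
      refine ⟨d ^ 2 / (2 ^ m - 1), ?_⟩
      have h := Nat.div_add_mod (d ^ 2) (2 ^ m - 1)
      rw [Nat.mod_eq_of_lt (show 1 < 2 ^ m - 1 by omega)] at hmod
      rw [mul_comm] at h
      omega
    by_cases hy : y = 0
    · subst hy
      rw [zero_pow]
      positivity
    · have hcard : y ^ (Fintype.card F - 1) = 1 := FiniteField.pow_card_sub_one_eq_one y hy
      rw [hF] at hcard
      rw [hq, mul_comm q, pow_add, pow_mul, hcard, one_pow, one_mul, pow_one]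
  have hinv : ∀ (α : F), α ^ (d + 1) = 1 → ∀ y : F, α * (α * y ^ d) ^ d = y := by
    intro α hα y
    rw [mul_pow, ← mul_assoc, ← pow_succ', ← pow_mul,
      show d * d = d ^ 2 from (pow_two d).symm, hα, one_mul, hkey]
  have i1 : ∀ y, π₁ (π₁ y) = y := fun y => by rw [hp1, hp1]; exact hinv α₁ h1 y
  have i2 : ∀ y, π₂ (π₂ y) = y := fun y => by rw [hp2, hp2]; exact hinv α₂ h2 y
  have i3 : ∀ y, π₃ (π₃ y) = y := fun y => by rw [hp3, hp3]; exact hinv α₃ h3 y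
  have i4 : ∀ y, π₄ (π₄ y) = y := fun y => by rw [hp4, hp4]; exact hinv α₄ h4 y
  have b1 : Function.Bijective π₁ := Function.Involutive.bijective i1
  have b2 : Function.Bijective π₂ := Function.Involutive.bijective i2
  have b3 : Function.Bijective π₃ := Function.Involutive.bijective i3
  have b4 : Function.Bijective π₄ := Function.Involutive.bijective i4
  have hinvFun : ∀ (π : F → F) (h : Function.Involutive π) (y : F),
      Function.invFun π y = π y := by
    intro π h y
    have : Function.invFun π (π (π y)) = π y :=
      Function.leftInverse_invFun h.injective (π y)
    rwa [h y] at this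
  have hsum : ∀ y, π₄ y = π₁ y + π₂ y + π₃ y := by
    intro y
    rw [hp1, hp2, hp3, hp4, h4def]; ring
  refine ⟨i1, i2, i3, i4, b1, b2, b3, b4, hsum, fun y => ?_⟩
  rw [hinvFun π₁ i1, hinvFun π₂ i2, hinvFun π₃ i3, hinvFun π₄ i4]
  exact hsum y
end
end
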